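/- Let A be an L-structure, X ⊆ Spec_K(A) an arbitrary subset, and π : A → A/ψ(X) the natural projection. Then the map θ ↦ π⁻¹(θ) is a homeomorphism from Spec_K(A/ψ(X)), equipped with its Zariski topology, onto the Zariski closure V(ψ(X)) of X, equipped with the subspace topology induced from the Zariski topology on Spec_K(A). -/

import Mathlib

open FirstOrder FirstOrder.Language Topology

universe u v w x y

/-- A congruence on an `L`-structure `A`, viewed as a set of pairs: an equivalence
relation respected by the interpretation of every function symbol. -/
def IsCong (L : FirstOrder.Language.{v, w}) (A : Type*) [L.Structure A]
    (θ : Set (A × A)) : Prop :=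
  (∀ a : A, (a, a) ∈ θ) ∧
  (∀ a b : A, (a, b) ∈ θ → (b, a) ∈ θ) ∧
  (∀ a b c : A, (a, b) ∈ θ → (b, c) ∈ θ → (a, c) ∈ θ) ∧
  ∀ (n : ℕ) (f : L.Functions n) (y z : Fin n → A),
    (∀ i, (y i, z i) ∈ θ) →
      (Structure.funMap f y, Structure.funMap f z) ∈ θ

/-- The setoid associated to a congruence. -/
def congSetoid {L : FirstOrder.Language.{v, w}} {A : Type*} [L.Structure A]
    (θ : Set (A × A)) (hθ : IsCong L A θ) : Setoid A :=
  ⟨fun a b => (a, b) ∈ θ,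
    ⟨fun a => hθ.1 a, fun h => hθ.2.1 _ _ h, fun h h' => hθ.2.2.1 _ _ _ h h'⟩⟩

/-- The natural `L`-structure on the quotient `A/θ` of `A` by a congruence `θ`. -/
noncomputable instance congQuotStructure {L : FirstOrder.Language.{v, w}} [L.IsAlgebraic]
    {A : Type*} [L.Structure A] {θ : Set (A × A)} {hθ : IsCong L A θ} :
    L.Structure (Quotient (congSetoid θ hθ)) where
  funMap {_} f q := Quotient.mk (congSetoid θ hθ)
    (Structure.funMap f fun i => (q i).out)
  RelMap {_} r _ := isEmptyElim r

/-- The kernel of a map, as a set of pairs. -/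
def mapKer {A : Type*} {B : Type*} (h : A → B) : Set (A × A) :=
  {p : A × A | h p.1 = h p.2}

/-- The preimage of a set of pairs under a map. -/
def pairPreimage {A : Type*} {B : Type*} (h : A → B) (θ : Set (B × B)) : Set (A × A) :=
  {p : A × A | (h p.1, h p.2) ∈ θ}

/-- The pushforward `ψ/θ = {(a/θ, a'/θ) : (a, a') ∈ ψ}` of a set of pairs to the
quotient by the congruence `θ`. -/
def quotPush {L : FirstOrder.Language.{v, w}} {A : Type*} [L.Structure A]
    (θ : Set (A × A)) (hθ : IsCong L A θ) (ψ : Set (A × A)) :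
    Set (Quotient (congSetoid θ hθ) × Quotient (congSetoid θ hθ)) :=
  {p | ∃ a a' : A, Quotient.mk (congSetoid θ hθ) a = p.1 ∧
        Quotient.mk (congSetoid θ hθ) a' = p.2 ∧ (a, a') ∈ ψ}

/-- The `K`-spectrum of `A`: the set of kernels of homomorphisms from `A` into
members of the class `K` (equivalently, the set of congruences `θ` on `A` such that
`A/θ` embeds into a member of `K`). -/
def SpecK {L : FirstOrder.Language.{v, w}} (K : ∀ B : Type u, L.Structure B → Prop)
    (A : Type*) [L.Structure A] : Set (Set (A × A)) :=
  {θ | ∃ (B : Type u) (iB : L.Structure B), K B iB ∧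
        ∃ h : @Language.Hom L A B _ iB, θ = mapKer h.toFun}

/-- The diagonal congruence on `A`. -/
def diagCong (A : Type*) : Set (A × A) := {p : A × A | p.1 = p.2}

/-- `A` is `K`-reduced: the intersection of all congruences in `Spec_K A` is the diagonal. -/
def IsKReduced {L : FirstOrder.Language.{v, w}} (K : ∀ B : Type u, L.Structure B → Prop)
    (A : Type*) [L.Structure A] : Prop :=
  ⋂₀ SpecK K A = diagCong A

/-- A `K`-radical congruence: an intersection of a (possibly empty) family of members
of `Spec_K A` (the empty intersection being `A × A`). -/
def IsKRadical {L : FirstOrder.Language.{v, w}} (K : ∀ B : Type u, L.Structure B → Prop)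
    (A : Type*) [L.Structure A] (θ : Set (A × A)) : Prop :=
  ∃ F : Set (Set (A × A)), F ⊆ SpecK K A ∧ θ = ⋂₀ F

/-- The Zariski closed subset of the `K`-spectrum determined by `S ⊆ A × A`. -/
def VClosed {L : FirstOrder.Language.{v, w}} (K : ∀ B : Type u, L.Structure B → Prop)
    (A : Type*) [L.Structure A] (S : Set (A × A)) : Set (Set (A × A)) :=
  {θ ∈ SpecK K A | S ⊆ θ}

/-- The `K`-radical of a set of pairs `S`. -/
def radK {L : FirstOrder.Language.{v, w}} (K : ∀ B : Type u, L.Structure B → Prop)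
    (A : Type*) [L.Structure A] (S : Set (A × A)) : Set (A × A) :=
  ⋂₀ VClosed K A S

/-- The Zariski closed subset of the `K`-spectrum (as a subtype) determined by `S`. -/
def VZar {L : FirstOrder.Language.{v, w}} (K : ∀ B : Type u, L.Structure B → Prop)
    (A : Type*) [L.Structure A] (S : Set (A × A)) : Set {θ // θ ∈ SpecK K A} :=
  {θ | S ⊆ (θ : Set (A × A))}

/-- The Zariski topology on the `K`-spectrum of `A`: the closed sets are the arbitrary
intersections of finite unions of Zariski closed sets `VZar K A S`. -/
def zariskiTopology {L : FirstOrder.Language.{v, w}} (K : ∀ B : Type u, L.Structure B → Prop)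
    (A : Type*) [L.Structure A] : TopologicalSpace {θ // θ ∈ SpecK K A} :=
  TopologicalSpace.generateFrom {U | ∃ S : Set (A × A), U = (VZar K A S)ᶜ}

/-- A product structure on a dependent function type. -/
instance piStructure {L : FirstOrder.Language.{v, w}} [L.IsAlgebraic]
    {ι : Type*} {B : ι → Type*} [∀ i, L.Structure (B i)] :
    L.Structure (∀ i, B i) where
  funMap {_} f q i := Structure.funMap f fun j => q j i
  RelMap {_} r _ := isEmptyElim r

/-- `A` embeds into a direct product of a (possibly empty) family of members of `K`. -/
def EmbedsInProduct {L : FirstOrder.Language.{v, w}} [L.IsAlgebraic]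
    (K : ∀ B : Type u, L.Structure B → Prop) (A : Type*) [L.Structure A] : Prop :=
  ∃ (ι : Type u) (B : ι → Type u) (iB : ∀ i, L.Structure (B i)),
    (∀ i, K (B i) (iB i)) ∧
      Nonempty (@Language.Embedding L A (∀ i, B i) _ (@piStructure L _ ι B iB))

/-- The term-algebra structure on `L.Term α`. -/
instance termStructure {L : FirstOrder.Language.{v, w}} [L.IsAlgebraic] {α : Type x} :
    L.Structure (L.Term α) where
  funMap {_} f q := Term.func f q
  RelMap {_} r _ := isEmptyElim r

/-- Evaluation of a term at an assignment `a : X → A`, for an explicitly given structure. -/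
def evalAt {L : FirstOrder.Language.{v, w}} {A : Type*} (iA : L.Structure A)
    {X : Type x} (a : X → A) : L.Term X → A :=
  letI := iA; fun t => Term.realize a t

/-- An equation (pair of terms) holds at an assignment `a`. -/
def EqHolds {L : FirstOrder.Language.{v, w}} {A : Type*} (iA : L.Structure A)
    {X : Type x} (a : X → A) (pq : L.Term X × L.Term X) : Prop :=
  evalAt iA a pq.1 = evalAt iA a pq.2

/-- `K` is equationally Noetherian. -/
def EqNoetherian {L : FirstOrder.Language.{v, w}}
    (K : ∀ B : Type u, L.Structure B → Prop) : Prop :=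
  ∀ (n : ℕ) (T : Set (L.Term (Fin n) × L.Term (Fin n))),
    ∃ T₀ ⊆ T, T₀.Finite ∧
      ∀ (A : Type u) (iA : L.Structure A), K A iA → ∀ a : Fin n → A,
        (∀ pq ∈ T₀, EqHolds iA a pq) → ∀ pq ∈ T, EqHolds iA a pq

/-- `A` is discriminated by `K`: every finite subset is separated injectively by a
homomorphism into a member of `K`. -/
def DiscriminatedBy {L : FirstOrder.Language.{v, w}}
    (K : ∀ B : Type u, L.Structure B → Prop) (A : Type*) [iA : L.Structure A] : Prop :=
  ∀ W : Set A, W.Finite → ∃ (B : Type u) (iB : L.Structure B), K B iB ∧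
    ∃ h : @Language.Hom L A B _ iB, Set.InjOn h.toFun W

/-- `A` is `n`-separated by `K` for every `n`. -/
def NSeparatedBy {L : FirstOrder.Language.{v, w}}
    (K : ∀ B : Type u, L.Structure B → Prop) (A : Type*) [iA : L.Structure A] : Prop :=
  ∀ (n : ℕ) (a b : Fin n → A), (∀ i, a i ≠ b i) →
    ∃ (B : Type u) (iB : L.Structure B), K B iB ∧
      ∃ h : @Language.Hom L A B _ iB, ∀ i, h.toFun (a i) ≠ h.toFun (b i)

/-- Any member of the `K`-spectrum is a congruence. -/
theorem isCong_of_mem_specK {L : FirstOrder.Language.{v, w}}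
    {K : ∀ B : Type u, L.Structure B → Prop} {A : Type*} [L.Structure A]
    {θ : Set (A × A)} (hθ : θ ∈ SpecK K A) : IsCong L A θ := by
  obtain ⟨B, iB, -, h, rfl⟩ := hθ
  refine ⟨fun a => rfl, fun a b hab => hab.symm, fun a b c hab hbc => hab.trans hbc,
    fun n f y z hyz => ?_⟩
  show h.toFun _ = h.toFun _
  have hy := @Language.Hom.map_fun' L A B _ iB h n f y
  have hz := @Language.Hom.map_fun' L A B _ iB h n f z
  rw [hy, hz]
  exact congrArg _ (funext fun i => hyz i)

/-- An arbitrary intersection of congruences is a congruence. -/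
theorem isCong_sInter {L : FirstOrder.Language.{v, w}} {A : Type*} [L.Structure A]
    {X : Set (Set (A × A))} (hX : ∀ θ ∈ X, IsCong L A θ) : IsCong L A (⋂₀ X) :=
  ⟨fun a θ hθ => (hX θ hθ).1 a,
   fun a b hab θ hθ => (hX θ hθ).2.1 a b (hab θ hθ),
   fun a b c hab hbc θ hθ => (hX θ hθ).2.2.1 a b c (hab θ hθ) (hbc θ hθ),
   fun n f y z hyz θ hθ => (hX θ hθ).2.2.2 n f y z (fun i => hyz i θ hθ)⟩


section MyAux

variable {L : FirstOrder.Language.{v, w}} [L.IsAlgebraic]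
  {K : ∀ B : Type u, L.Structure B → Prop} {A : Type u} [L.Structure A]
  {θ0 : Set (A × A)} {h0 : IsCong L A θ0}

theorem myMkFunMap (n : ℕ) (f : L.Functions n) (a : Fin n → A) :
    Quotient.mk (congSetoid θ0 h0) (Structure.funMap f a)
      = Structure.funMap f (fun i => Quotient.mk (congSetoid θ0 h0) (a i)) := by
  show _ = Quotient.mk (congSetoid θ0 h0)
      (Structure.funMap f fun i => (Quotient.mk (congSetoid θ0 h0) (a i)).out)
  apply Quotient.sound
  refine h0.2.2.2 n f _ _ fun i => h0.2.1 _ _ ?_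
  exact Quotient.exact (Quotient.out_eq (Quotient.mk (congSetoid θ0 h0) (a i)))

theorem myForwardMem {θ : Set (Quotient (congSetoid θ0 h0) × Quotient (congSetoid θ0 h0))}
    (hθ : θ ∈ SpecK K (Quotient (congSetoid θ0 h0))) :
    pairPreimage (Quotient.mk (congSetoid θ0 h0)) θ ∈ SpecK K A := by
  obtain ⟨B, iB, hKB, h, rfl⟩ := hθ
  refine ⟨B, iB, hKB,
    { toFun := fun a => h.toFun (Quotient.mk (congSetoid θ0 h0) a)
      map_fun' := ?_
      map_rel' := fun r _ _ => isEmptyElim r }, rfl⟩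
  intro n f a
  show h.toFun (Quotient.mk (congSetoid θ0 h0) (Structure.funMap f a)) =
    Structure.funMap f fun i => h.toFun (Quotient.mk (congSetoid θ0 h0) (a i))
  rw [myMkFunMap]
  exact @Language.Hom.map_fun' L _ B _ iB h n f _

theorem myBackwardMem {η : Set (A × A)} (hη : η ∈ SpecK K A) (hsub : θ0 ⊆ η) :
    quotPush θ0 h0 η ∈ SpecK K (Quotient (congSetoid θ0 h0)) := by
  obtain ⟨B, iB, hKB, g, rfl⟩ := hη
  have hcompat : ∀ a b : A, (congSetoid θ0 h0).r a b → g.toFun a = g.toFun b :=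
    fun a b hab => hsub hab
  refine ⟨B, iB, hKB,
    { toFun := Quotient.lift g.toFun fun a b => hcompat a b
      map_fun' := ?_
      map_rel' := fun r _ _ => isEmptyElim r }, ?_⟩
  · intro n f q
    show g.toFun (Structure.funMap f fun i => (q i).out) = _
    rw [@Language.Hom.map_fun' L _ B _ iB g n f _]
    congr 1
    funext i
    show g.toFun ((q i).out) = Quotient.lift g.toFun (fun a b => hcompat a b) (q i)
    conv_rhs => rw [← Quotient.out_eq (q i)]
    rfl
  · ext ⟨q, q'⟩
    constructor
    · rintro ⟨a, a', rfl, rfl, hab⟩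
      exact hab
    · intro hqq
      refine ⟨q.out, q'.out, Quotient.out_eq q, Quotient.out_eq q', ?_⟩
      show g.toFun q.out = g.toFun q'.out
      have h1 : g.toFun q.out = Quotient.lift g.toFun (fun a b => hcompat a b) q := by
        conv_rhs => rw [← Quotient.out_eq q]
        rfl
      have h2 : g.toFun q'.out = Quotient.lift g.toFun (fun a b => hcompat a b) q' := by
        conv_rhs => rw [← Quotient.out_eq q']
        rfl
      rw [h1, h2]; exact hqq

theorem myPrePush {η : Set (A × A)} (hη : IsCong L A η) (hsub : θ0 ⊆ η) :
    pairPreimage (Quotient.mk (congSetoid θ0 h0)) (quotPush θ0 h0 η) = η := by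
  ext ⟨a, a'⟩
  constructor
  · rintro ⟨b, b', hb, hb', hbb⟩
    have h1 : (b, a) ∈ η := hsub (Quotient.exact hb)
    have h2 : (b', a') ∈ η := hsub (Quotient.exact hb')
    exact hη.2.2.1 _ _ _ (hη.2.1 _ _ h1) (hη.2.2.1 _ _ _ hbb h2)
  · intro h
    exact ⟨a, a', rfl, rfl, h⟩

theorem myPushPre (θ : Set (Quotient (congSetoid θ0 h0) × Quotient (congSetoid θ0 h0))) :
    quotPush θ0 h0 (pairPreimage (Quotient.mk (congSetoid θ0 h0)) θ) = θ := by
  ext ⟨q, q'⟩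
  constructor
  · rintro ⟨a, a', rfl, rfl, hab⟩
    exact hab
  · intro h
    refine ⟨q.out, q'.out, Quotient.out_eq q, Quotient.out_eq q', ?_⟩
    show (Quotient.mk _ q.out, Quotient.mk _ q'.out) ∈ θ
    rwa [Quotient.out_eq, Quotient.out_eq]

theorem myPushSubset {η : Set (A × A)} (hη : IsCong L A η) (hsub : θ0 ⊆ η)
    (T : Set (Quotient (congSetoid θ0 h0) × Quotient (congSetoid θ0 h0))) :
    T ⊆ quotPush θ0 h0 η ↔
      Prod.map Quotient.out Quotient.out '' T ⊆ η := by
  constructor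
  · rintro hT _ ⟨⟨q, q'⟩, hq, rfl⟩
    obtain ⟨a, a', ha, ha', haa⟩ := hT hq
    have h1 : (a, q.out) ∈ η := hsub (Quotient.exact (ha.trans (Quotient.out_eq q).symm))
    have h2 : (a', q'.out) ∈ η := hsub (Quotient.exact (ha'.trans (Quotient.out_eq q').symm))
    exact hη.2.2.1 _ _ _ (hη.2.1 _ _ h1) (hη.2.2.1 _ _ _ haa h2)
  · intro hT ⟨q, q'⟩ hq
    exact ⟨q.out, q'.out, Quotient.out_eq q, Quotient.out_eq q',
      hT ⟨(q, q'), hq, rfl⟩⟩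

end MyAux

/-- for `X ⊆ Spec_K A`, the map `θ ↦ π⁻¹(θ)` is a homeomorphism from
`Spec_K (A/ψ(X))` (with its Zariski topology) onto the Zariski closed set `V(ψ(X))`
(with the subspace topology induced from the Zariski topology on `Spec_K A`). -/
theorem statement8 {L : FirstOrder.Language.{v, w}} [L.IsAlgebraic]
    (K : ∀ B : Type u, L.Structure B → Prop) (A : Type u) [L.Structure A]
    (X : Set (Set (A × A))) (hX : X ⊆ SpecK K A) (hc : IsCong L A (⋂₀ X)) :
    letI t1 : TopologicalSpace {θ // θ ∈ SpecK K (Quotient (congSetoid (⋂₀ X) hc))} :=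
      zariskiTopology K (Quotient (congSetoid (⋂₀ X) hc))
    letI t2 : TopologicalSpace (↥(VZar K A (⋂₀ X))) :=
      TopologicalSpace.induced Subtype.val (zariskiTopology K A)
    ∃ F : @Homeomorph {θ // θ ∈ SpecK K (Quotient (congSetoid (⋂₀ X) hc))}
        (↥(VZar K A (⋂₀ X))) t1 t2,
      ∀ ψ : {θ // θ ∈ SpecK K (Quotient (congSetoid (⋂₀ X) hc))},
        ((@Homeomorph.toEquiv _ _ t1 t2 F) ψ).1.1 =
          pairPreimage (Quotient.mk (congSetoid (⋂₀ X) hc)) ψ.1 := by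
  set θ0 := ⋂₀ X with hθ0
  set Q := Quotient (congSetoid θ0 hc) with hQ
  set pr := Quotient.mk (congSetoid θ0 hc) with hpr
  -- the equivalence
  have hsubpre : ∀ θ : {θ // θ ∈ SpecK K Q}, θ0 ⊆ pairPreimage pr θ.1 := by
    rintro θ ⟨a, a'⟩ h
    have : pr a = pr a' := Quotient.sound h
    show (pr a, pr a') ∈ θ.1
    rw [this]
    exact (isCong_of_mem_specK θ.2).1 _
  let e : {θ // θ ∈ SpecK K Q} ≃ ↥(VZar K A θ0) :=
    { toFun := fun θ => ⟨⟨pairPreimage pr θ.1, myForwardMem θ.2⟩, hsubpre θ⟩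
      invFun := fun η => ⟨quotPush θ0 hc η.1.1, myBackwardMem η.1.2 η.2⟩
      left_inv := fun θ => Subtype.ext (myPushPre θ.1)
      right_inv := fun η => Subtype.ext (Subtype.ext
        (myPrePush (isCong_of_mem_specK η.1.2) η.2)) }
  have hcont1 : @Continuous _ _ (zariskiTopology K Q) (TopologicalSpace.induced Subtype.val (zariskiTopology K A)) e := by
    show @Continuous _ _ (zariskiTopology K Q) (TopologicalSpace.induced Subtype.val
      (TopologicalSpace.generateFrom _)) e
    rw [induced_generateFrom_eq]
    rw [continuous_generateFrom_iff]
    rintro s ⟨U, ⟨S, rfl⟩, rfl⟩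
    have : e ⁻¹' (Subtype.val ⁻¹' (VZar K A S)ᶜ) =
        (VZar K Q (Prod.map pr pr '' S))ᶜ := by
      ext θ
      simp only [Set.mem_preimage, Set.mem_compl_iff, VZar, Set.mem_setOf_eq]
      constructor
      · intro h h'
        exact h (fun p hp => h' ⟨p, hp, rfl⟩)
      · intro h h'
        refine h ?_
        rintro _ ⟨p, hp, rfl⟩
        exact h' hp
    rw [this]
    exact TopologicalSpace.GenerateOpen.basic _ ⟨_, rfl⟩
  have hcont2 : @Continuous _ _ (TopologicalSpace.induced Subtype.val (zariskiTopology K A)) (zariskiTopology K Q) e.symm := by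
    show @Continuous _ _ (TopologicalSpace.induced Subtype.val (zariskiTopology K A))
      (TopologicalSpace.generateFrom _) e.symm
    rw [continuous_generateFrom_iff]
    rintro s ⟨T, rfl⟩
    have : e.symm ⁻¹' (VZar K Q T)ᶜ =
        Subtype.val ⁻¹' (VZar K A (Prod.map Quotient.out Quotient.out '' T))ᶜ := by
      ext η
      simp only [Set.mem_preimage, Set.mem_compl_iff, VZar, Set.mem_setOf_eq]
      show (¬ T ⊆ quotPush θ0 hc η.1.1) ↔
        ¬ Prod.map Quotient.out Quotient.out '' T ⊆ η.1.1
      exact not_congr (myPushSubset (isCong_of_mem_specK η.1.2) η.2 T)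
    rw [this]
    exact @isOpen_induced _ _ (zariskiTopology K A) Subtype.val _
      (TopologicalSpace.GenerateOpen.basic _ ⟨_, rfl⟩)
  exact ⟨@Homeomorph.mk _ _ (zariskiTopology K Q) (TopologicalSpace.induced Subtype.val (zariskiTopology K A)) e hcont1 hcont2, fun ψ => rfl⟩
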